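/- Let p(s) = Σ_{k=0}^{m} a_k s^k be a symmetric trapezoidal polynomial with all a_k > 0 whose stable part has length l < n, where m ≥ n and [n] = 1 + s + ... + s^{n−1}. Then p(s)·[n] is a symmetric trapezoidal polynomial whose stable part has length 0 if m + n − 1 is even, and length 1 if m + n − 1 is odd. -/
import Mathlib


open Polynomial

/-- `qpoly n = 1 + s + ⋯ + s^(n-1)`, denoted `[n]` in the paper. -/
noncomputable def qpoly (n : ℕ) : Polynomial ℝ :=
  ∑ i ∈ Finset.range n, Polynomial.X ^ i

/-- All coefficients of `p` over its support `0, …, natDegree p` are positive. -/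
def PosCoeffs (p : Polynomial ℝ) : Prop :=
  ∀ k ≤ p.natDegree, 0 < p.coeff k

/-- `p` is symmetric: its coefficient sequence over its support reads the same
forwards and backwards. -/
def SymmetricPoly (p : Polynomial ℝ) : Prop :=
  ∀ k ≤ p.natDegree, p.coeff k = p.coeff (p.natDegree - k)

/-- `p` is trapezoidal: its coefficients strictly increase, then are constant,
then strictly decrease. -/
def Trapezoidal (p : Polynomial ℝ) : Prop :=
  ∃ i j : ℕ, i ≤ j ∧ j ≤ p.natDegree ∧
    (∀ k, k < i → p.coeff k < p.coeff (k + 1)) ∧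
    (∀ k, i ≤ k → k < j → p.coeff k = p.coeff (k + 1)) ∧
    (∀ k, j ≤ k → k < p.natDegree → p.coeff (k + 1) < p.coeff k)

/-- `p` has a run of `l + 1` equal consecutive coefficients within its support. -/
def HasRun (p : Polynomial ℝ) (l : ℕ) : Prop :=
  ∃ k0 : ℕ, k0 + l ≤ p.natDegree ∧ ∀ i ≤ l, p.coeff (k0 + i) = p.coeff k0

/-- The stable part of `p` has length `l`: `l` is the largest integer such that
some `l + 1` consecutive coefficients of `p` are all equal. -/
def StableLength (p : Polynomial ℝ) (l : ℕ) : Prop :=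
  HasRun p l ∧ ∀ l', HasRun p l' → l' ≤ l

lemma coeff_qpoly (n k : ℕ) : (qpoly n).coeff k = if k < n then 1 else 0 := by
  simp [qpoly, Polynomial.finset_sum_coeff, Polynomial.coeff_X_pow]

lemma qpoly_mul_sub (n : ℕ) : qpoly n * (X - 1) = X ^ n - 1 := by
  simpa [qpoly] using geom_sum_mul (X : Polynomial ℝ) n

lemma natDegree_qpoly (n : ℕ) (hn : 1 ≤ n) : (qpoly n).natDegree = n - 1 := by
  apply le_antisymm
  · apply Polynomial.natDegree_sum_le_of_forall_le
    intro i hi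
    simpa using Nat.le_sub_one_of_lt (Finset.mem_range.mp hi)
  · apply Polynomial.le_natDegree_of_ne_zero
    rw [coeff_qpoly]
    have : n - 1 < n := by omega
    simp [this]

lemma qpoly_ne_zero (n : ℕ) (hn : 1 ≤ n) : qpoly n ≠ 0 := by
  intro h
  have := coeff_qpoly n 0
  rw [h] at this
  simp [show 0 < n from hn] at this

/-- The key coefficient-difference identity for multiplication by `[n]`. -/
lemma diff_id (p : Polynomial ℝ) (n k : ℕ) :
    (p * qpoly n).coeff (k + 1) - (p * qpoly n).coeff k
      = p.coeff (k + 1) - (if n ≤ k + 1 then p.coeff (k + 1 - n) else 0) := by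
  have h : (p * qpoly n) * (X - 1) = p * (X ^ n - 1) := by
    rw [mul_assoc, qpoly_mul_sub]
  have h2 := congrArg (fun r => Polynomial.coeff r (k+1)) h
  simp only [mul_sub, mul_one, Polynomial.coeff_sub, Polynomial.coeff_mul_X,
    Polynomial.coeff_mul_X_pow'] at h2
  linarith [h2]

lemma revAt_apply (N i : ℕ) : revAt N i = if i ≤ N then N - i else i := by
  split
  · exact revAt_le ‹_›
  · exact (revAtFun_eq N i).symm.trans (by unfold revAtFun; split <;> omega)

lemma reflect_self (p : Polynomial ℝ) (N : ℕ)
    (hs : ∀ k ≤ N, p.coeff k = p.coeff (N - k)) : reflect N p = p := by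
  ext i
  rw [coeff_reflect, revAt_apply]
  split
  · exact (hs i ‹_›).symm
  · rfl

lemma reflect_qpoly (n : ℕ) (hn : 1 ≤ n) : reflect (n - 1) (qpoly n) = qpoly n := by
  ext i
  rw [coeff_reflect, revAt_apply, coeff_qpoly, coeff_qpoly]
  by_cases h1 : i ≤ n - 1
  · rw [if_pos h1, if_pos (by omega : n - 1 - i < n), if_pos (by omega : i < n)]
  · rw [if_neg h1]

theorem stableLength_mul_qpoly_of_lt (p : Polynomial ℝ) (m n l : ℕ)
    (hdeg : p.natDegree = m) (hn : 1 ≤ n) (hmn : n ≤ m) (hln : l < n)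
    (hpos : PosCoeffs p) (hsym : SymmetricPoly p) (htrap : Trapezoidal p)
    (hlen : StableLength p l) :
    SymmetricPoly (p * qpoly n) ∧ Trapezoidal (p * qpoly n) ∧
      StableLength (p * qpoly n) (if Even (m + n - 1) then 0 else 1) := by
  set q : Polynomial ℝ := p * qpoly n with hq
  have hp0 : p ≠ 0 := by
    intro h
    have := hpos 0 (Nat.zero_le _)
    rw [h] at this; simp at this
  have hqdeg : q.natDegree = (m + n - 1) := by
    rw [hq, Polynomial.natDegree_mul hp0 (qpoly_ne_zero n hn), hdeg,
      natDegree_qpoly n hn]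
    omega
  -- symmetry of p as p.coeff function
  have hsym' : ∀ k ≤ m, p.coeff k = p.coeff (m - k) := by
    intro k hk
    have := hsym k (by rw [hdeg]; exact hk)
    rwa [hdeg] at this
  have hposa : ∀ k ≤ m, 0 < p.coeff k := by
    intro k hk; exact hpos k (by rw [hdeg]; exact hk)
  -- reflect q = q
  have hrefl : reflect (m + n - 1) q = q := by
    have hM' : (m + n - 1) = m + (n - 1) := by omega
    rw [hq, hM', reflect_mul p (qpoly n) (by rw [hdeg]) (by rw [natDegree_qpoly n hn]),
      reflect_self p m hsym', reflect_qpoly n hn]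
  have hsymq : SymmetricPoly q := by
    intro k hk
    rw [hqdeg] at hk
    conv_lhs => rw [← hrefl]
    rw [coeff_reflect, revAt_apply, if_pos hk, hqdeg]
  have hsymb : ∀ k ≤ (m + n - 1), q.coeff k = q.coeff ((m + n - 1) - k) := by
    intro k hk
    have := hsymq k (by rw [hqdeg]; exact hk)
    rwa [hqdeg] at this
  -- structure of p
  obtain ⟨i₀, j₀, hij, hj₀m, hinc, hconst, hdec⟩ := htrap
  rw [hdeg] at hj₀m hdec
  have step_le : ∀ k, k < j₀ → p.coeff k ≤ p.coeff (k + 1) := by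
    intro k hk
    rcases lt_or_ge k i₀ with h | h
    · exact (hinc k h).le
    · exact (hconst k h hk).le
  have mono_up : ∀ d u, u + d ≤ j₀ → p.coeff u ≤ p.coeff (u + d) := by
    intro d
    induction d with
    | zero => intro u _; simp
    | succ d ih =>
      intro u h
      calc p.coeff u ≤ p.coeff (u + d) := ih u (by omega)
        _ ≤ p.coeff (u + d + 1) := step_le _ (by omega)
  have strict_up : ∀ u v, u < v → u < i₀ → v ≤ j₀ → p.coeff u < p.coeff v := by
    intro u v huv hui hvj
    calc p.coeff u < p.coeff (u + 1) := hinc u hui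
      _ ≤ p.coeff (u + 1 + (v - (u + 1))) := mono_up _ _ (by omega)
      _ = p.coeff v := by rw [show u + 1 + (v - (u + 1)) = v by omega]
  have mono_down : ∀ d u, j₀ ≤ u → u + d ≤ m → p.coeff (u + d) ≤ p.coeff u := by
    intro d
    induction d with
    | zero => intro u _ _; simp
    | succ d ih =>
      intro u hju h
      show p.coeff (u + d + 1) ≤ p.coeff u
      calc p.coeff (u + d + 1) ≤ p.coeff (u + d) := (hdec _ (by omega) (by omega)).le
        _ ≤ p.coeff u := ih u hju (by omega)
  have strict_down : ∀ u v, j₀ ≤ u → u < v → v ≤ m → p.coeff v < p.coeff u := by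
    intro u v hju huv hvm
    calc p.coeff v = p.coeff (u + 1 + (v - (u + 1))) := by rw [show u + 1 + (v - (u+1)) = v by omega]
      _ ≤ p.coeff (u + 1) := mono_down _ _ (by omega) (by omega)
      _ < p.coeff u := hdec u hju (by omega)
  have plateau_eq : ∀ t, i₀ + t ≤ j₀ → p.coeff (i₀ + t) = p.coeff i₀ := by
    intro t
    induction t with
    | zero => intro _; rfl
    | succ t ih =>
      intro h
      have := hconst (i₀ + t) (by omega) (by omega)
      rw [show i₀ + (t + 1) = i₀ + t + 1 by omega, ← this, ih (by omega)]
  have hji_l : j₀ - i₀ ≤ l := by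
    apply hlen.2
    exact ⟨i₀, by rw [hdeg]; omega, fun i hi => plateau_eq i (by omega)⟩
  have hmaxj : p.coeff j₀ = p.coeff i₀ := by
    have := plateau_eq (j₀ - i₀) (by omega)
    rwa [show i₀ + (j₀ - i₀) = j₀ by omega] at this
  have hij_m : i₀ + j₀ = m := by
    have h1 : p.coeff (m - j₀) = p.coeff j₀ := by
      have := hsym' (m - j₀) (by omega)
      rwa [show m - (m - j₀) = j₀ by omega] at this
    have h2 : p.coeff (m - i₀) = p.coeff i₀ := by
      have := hsym' (m - i₀) (by omega)
      rwa [show m - (m - i₀) = i₀ by omega] at this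
    have le1 : i₀ ≤ m - j₀ := by
      by_contra hcon
      push_neg at hcon
      have := strict_up (m - j₀) j₀ (by omega) hcon le_rfl
      linarith [h1]
    have le3 : m - i₀ ≤ j₀ := by
      by_contra hcon
      push_neg at hcon
      have := strict_down j₀ (m - i₀) le_rfl hcon (by omega)
      rw [h2, ← hmaxj] at this
      linarith
    omega
  -- the key strict inequality
  have KEY : ∀ u v : ℕ, u + n ≤ v → u + v < m → v ≤ m → p.coeff u < p.coeff v := by
    intro u v huv hsum hvm
    rcases le_or_gt v j₀ with hvj | hvj
    · have hui : u < i₀ := by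
        by_contra hcon
        push_neg at hcon
        omega
      exact strict_up u v (by omega) hui hvj
    · have h1 : u < m - v := by omega
      have h2 : m - v < i₀ := by omega
      have := strict_up u (m - v) h1 (by omega) (by omega)
      rwa [← hsym' v hvm] at this
  -- difference facts for q
  have D1 : ∀ k : ℕ, 2 * k + 3 ≤ m + n → q.coeff k < q.coeff (k + 1) := by
    intro k hk
    have hd := diff_id p n k
    by_cases hcase : n ≤ k + 1
    · rw [if_pos hcase] at hd
      have := KEY (k + 1 - n) (k + 1) (by omega) (by omega) (by omega)
      rw [hq]; linarith
    · rw [if_neg hcase] at hd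
      have := hposa (k + 1) (by omega)
      rw [hq]; linarith
  have D2 : ∀ k : ℕ, 2 * k + 2 = m + n → q.coeff k = q.coeff (k + 1) := by
    intro k hk
    have hd := diff_id p n k
    have hcase : n ≤ k + 1 := by omega
    rw [if_pos hcase] at hd
    have heq : p.coeff (k + 1 - n) = p.coeff (k + 1) := by
      have := hsym' (k + 1 - n) (by omega)
      rwa [show m - (k + 1 - n) = k + 1 by omega] at this
    rw [hq]; linarith
  have D3 : ∀ k : ℕ, (m + n - 1) ≤ 2 * k → k < (m + n - 1) → q.coeff (k + 1) < q.coeff k := by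
    intro k h1 h2
    have e1 : q.coeff k = q.coeff ((m + n - 1) - k) := hsymb k (by omega)
    have e2 : q.coeff (k + 1) = q.coeff ((m + n - 1) - (k + 1)) := hsymb (k + 1) (by omega)
    have := D1 ((m + n - 1) - (k + 1)) (by omega)
    rw [show (m + n - 1) - (k + 1) + 1 = (m + n - 1) - k by omega] at this
    rw [e1, e2]; exact this
  -- no equalities away from the middle
  have no_eq : ∀ k, k < (m + n - 1) → q.coeff k = q.coeff (k + 1) → 2 * k + 2 = m + n := by
    intro k hkM he
    rcases le_or_gt (2 * k + 3) (m + n) with h | h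
    · exact absurd he (ne_of_lt (D1 k h))
    · rcases le_or_gt (m + n) (2 * k + 1) with h2 | h2
      · exact absurd he (ne_of_gt (D3 k (by omega) hkM))
      · omega
  constructor
  · exact hsymq
  constructor
  · refine ⟨(m + n - 1) / 2, ((m + n - 1) + 1) / 2, by omega, by rw [hqdeg]; omega, ?_, ?_, ?_⟩
    · intro k hk
      exact D1 k (by omega)
    · intro k h1 h2
      exact D2 k (by omega)
    · intro k h1 h2
      rw [hqdeg] at h2
      exact D3 k (by omega) h2
  constructor
  · split
    case isTrue hE =>
      exact ⟨0, by rw [hqdeg]; omega, fun i hi => by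
        rw [Nat.le_zero.mp hi]⟩
    case isFalse hE =>
      obtain ⟨r, hr⟩ := Nat.not_even_iff_odd.mp hE
      refine ⟨(m + n - 1) / 2, by rw [hqdeg]; omega, ?_⟩
      intro i hi
      interval_cases i
      · rfl
      · exact (D2 ((m + n - 1) / 2) (by omega)).symm
  · rintro l' ⟨k0, hk0, hrun⟩
    rw [hqdeg] at hk0
    split
    case isTrue hE =>
      obtain ⟨r, hr⟩ := hE
      by_contra hcon
      push_neg at hcon
      have h1 := hrun 1 (by omega)
      have := no_eq k0 (by omega) h1.symm
      omega
    case isFalse hE =>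
      by_contra hcon
      push_neg at hcon
      have h1 := hrun 1 (by omega)
      have h2 := hrun 2 (by omega)
      have e1 := no_eq k0 (by omega) h1.symm
      have e2 : q.coeff (k0 + 1) = q.coeff (k0 + 1 + 1) := by
        rw [show k0 + 1 + 1 = k0 + 2 by omega, h1, h2]
      have := no_eq (k0 + 1) (by omega) e2
      omega
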